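/- Let γ ∈ C be a primitive p^k-th root of unity (p prime, k ≥ 1). Let M be a complex matrix all of whose entries lie in {0, 1, γ, γ^2, ..., γ^{p^k−1}}, and let M̂ be the 0-1 matrix of the same dimensions with M̂_{ij} = 0 if M_{ij} = 0 and M̂_{ij} = 1 otherwise. Then rank_C(M) ≥ rank_{F_p}(M̂), where M̂ is viewed over F_p. -/

import Mathlib

open Polynomial Matrix

private lemma mulVec_eq_sum_cols {R : Type*} [CommRing R] {m n : Type*} [Fintype n]
    (A : Matrix m n R) (c : n → R) : A.mulVec c = ∑ j, c j • Aᵀ j := by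
  ext i
  simp [Matrix.mulVec, dotProduct, Finset.sum_apply, mul_comm]

private lemma exists_left_inv {K : Type*} [Field K] {m n : Type*} [Fintype m] [Fintype n]
    [DecidableEq m] [DecidableEq n] (A : Matrix m n K) (h : LinearIndependent K (fun j => Aᵀ j)) :
    ∃ B : Matrix n m K, B * A = 1 := by
  have hker : LinearMap.ker (Matrix.toLin' A) = ⊥ := by
    rw [LinearMap.ker_eq_bot']
    intro c hc
    have hsum : ∑ j, c j • Aᵀ j = 0 := by
      rw [← mulVec_eq_sum_cols]
      simpa [Matrix.toLin'_apply] using hc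
    exact funext (Fintype.linearIndependent_iff.mp h c hsum)
  obtain ⟨g, hg⟩ := LinearMap.exists_leftInverse_of_injective _ hker
  refine ⟨LinearMap.toMatrix' g, ?_⟩
  calc LinearMap.toMatrix' g * A
      = LinearMap.toMatrix' g * LinearMap.toMatrix' (Matrix.toLin' A) := by
        rw [LinearMap.toMatrix'_toLin']
    _ = LinearMap.toMatrix' (g ∘ₗ Matrix.toLin' A) := (LinearMap.toMatrix'_comp _ _).symm
    _ = 1 := by rw [hg, LinearMap.toMatrix'_id]

private lemma li_of_left_inv {K : Type*} [CommRing K] {m n : Type*} [Fintype m] [Fintype n]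
    [DecidableEq n] (A : Matrix m n K) (B : Matrix n m K) (hBA : B * A = 1) :
    LinearIndependent K (fun j => Aᵀ j) := by
  rw [Fintype.linearIndependent_iff]
  intro g hg j
  have h1 : A.mulVec g = 0 := by rw [mulVec_eq_sum_cols, hg]
  have h2 : (B * A).mulVec g = 0 := by rw [← Matrix.mulVec_mulVec, h1, Matrix.mulVec_zero]
  rw [hBA, Matrix.one_mulVec] at h2
  exact congrFun h2 j

private lemma key_lemma {p : ℕ} [Fact p.Prime] {k : ℕ} (hk : 1 ≤ k)
    (γ : ℂ) (hγ : IsPrimitiveRoot γ (p ^ k))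
    {m₁ : ℕ} {ι : Type} [Fintype ι] [DecidableEq ι]
    (A : Matrix (Fin m₁) ι ℂ) (Ah : Matrix (Fin m₁) ι (ZMod p))
    (hA : ∀ i j, A i j = 0 ∨ ∃ e : ℕ, A i j = γ ^ e)
    (hrel : ∀ i j, (A i j = 0 → Ah i j = 0) ∧ (A i j ≠ 0 → Ah i j = 1))
    (hind : LinearIndependent (ZMod p) (fun j => Ahᵀ j)) :
    LinearIndependent ℂ (fun j => Aᵀ j) := by
  classical
  haveI : NeZero p := ⟨(Fact.out : p.Prime).ne_zero⟩
  obtain ⟨B, hB⟩ := exists_left_inv Ah hind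
  have hexp : ∀ i j, A i j ≠ 0 → ∃ e : ℕ, A i j = γ ^ e := fun i j h => (hA i j).resolve_left h
  set P : Matrix (Fin m₁) ι ℤ[X] :=
    Matrix.of fun i j => if h : A i j = 0 then 0 else X ^ Classical.choose (hexp i j h) with hP
  set BZ : Matrix ι (Fin m₁) ℤ[X] := Matrix.of fun j i => C ((B j i).val : ℤ) with hBZ
  set φγ : ℤ[X] →+* ℂ := (Polynomial.aeval γ).toRingHom with hφγ
  set φ1 : ℤ[X] →+* ZMod p := (Int.castRingHom (ZMod p)).comp (Polynomial.evalRingHom 1) with hφ1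
  have hPγ : P.map φγ = A := by
    ext i j
    by_cases h : A i j = 0
    · simp [hP, Matrix.map_apply, h]
    · have hsp := Classical.choose_spec (hexp i j h)
      simp [hP, Matrix.map_apply, h, hφγ, ← hsp]
  have hP1 : P.map φ1 = Ah := by
    ext i j
    by_cases h : A i j = 0
    · simp [hP, Matrix.map_apply, h, (hrel i j).1 h]
    · simp [hP, Matrix.map_apply, h, (hrel i j).2 h, hφ1]
  have hB1 : BZ.map φ1 = B := by
    ext j i
    simp only [hBZ, Matrix.map_apply, Matrix.of_apply, hφ1, RingHom.comp_apply,
      Polynomial.coe_evalRingHom, Polynomial.eval_C, Int.coe_castRingHom, Int.cast_natCast,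
      ZMod.natCast_val, ZMod.cast_id, ZMod.intCast_zmod_cast]
  set N : Matrix ι ι ℤ[X] := BZ * P with hN
  have hdet1 : φ1 N.det = 1 := by
    rw [RingHom.map_det, RingHom.mapMatrix_apply, hN, Matrix.map_mul, hB1, hP1, hB,
      Matrix.det_one]
  have hdetγ : φγ N.det ≠ 0 := by
    intro h0
    have hppos : 0 < p ^ k := pow_pos (Fact.out : p.Prime).pos k
    have hint : IsIntegral ℤ γ := hγ.isIntegral hppos
    have hdvd : minpoly ℤ γ ∣ N.det := minpoly.isIntegrallyClosed_dvd hint (by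
      simpa [hφγ] using h0)
    rw [← Polynomial.cyclotomic_eq_minpoly hγ hppos] at hdvd
    obtain ⟨E, hE⟩ := hdvd
    have hcy : φ1 (Polynomial.cyclotomic (p ^ k) ℤ) = 0 := by
      obtain ⟨k', rfl⟩ : ∃ k', k = k' + 1 := ⟨k - 1, (Nat.succ_pred_eq_of_pos hk).symm⟩
      simp [hφ1, Polynomial.eval_one_cyclotomic_prime_pow]
    rw [hE, _root_.map_mul, hcy, zero_mul] at hdet1
    exact one_ne_zero hdet1.symm
  set Nc : Matrix ι ι ℂ := N.map φγ with hNc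
  have hNcA : Nc = (BZ.map φγ) * A := by
    rw [hNc, hN, Matrix.map_mul, hPγ]
  have hu : IsUnit Nc.det := by
    rw [isUnit_iff_ne_zero, hNc, ← RingHom.mapMatrix_apply, ← RingHom.map_det]
    exact hdetγ
  refine li_of_left_inv A (Nc⁻¹ * BZ.map φγ) ?_
  rw [Matrix.mul_assoc, ← hNcA]
  exact Matrix.nonsing_inv_mul _ hu

/-- If every entry of a complex matrix `M` is `0` or a power of a
primitive `p^k`-th root of unity `γ`, and `M̂` is its 0-1 support matrix viewed over
`F_p`, then `rank_C(M) ≥ rank_{F_p}(M̂)`. -/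
theorem rank_complex_ge_rank_support
    {p : ℕ} [Fact p.Prime] {k : ℕ} (hk : 1 ≤ k)
    (γ : ℂ) (hγ : IsPrimitiveRoot γ (p ^ k))
    {m₁ m₂ : ℕ} (M : Matrix (Fin m₁) (Fin m₂) ℂ)
    (hM : ∀ i j, M i j = 0 ∨ ∃ e : ℕ, M i j = γ ^ e)
    (Mhat : Matrix (Fin m₁) (Fin m₂) (ZMod p))
    (hMhat : ∀ i j, (M i j = 0 → Mhat i j = 0) ∧ (M i j ≠ 0 → Mhat i j = 1)) :
    Mhat.rank ≤ M.rank := by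
  classical
  obtain ⟨s, hst, hspan, hli⟩ := exists_linearIndependent (ZMod p) (Set.range Mhatᵀ)
  have hsfin : s.Finite := Set.Finite.subset (Set.finite_range _) hst
  haveI : Fintype s := hsfin.fintype
  have hrank : Mhat.rank = s.toFinset.card := by
    rw [Matrix.rank, Matrix.range_mulVecLin,
      show Set.range Mhat.col = Set.range Mhatᵀ from rfl, ← hspan, finrank_span_set_eq_card hli]
  have hpick : ∀ v : s, ∃ j : Fin m₂, Mhatᵀ j = (v : Fin m₁ → ZMod p) := fun v => hst v.2
  choose f hf using hpick
  set A : Matrix (Fin m₁) ↥s ℂ := Matrix.of fun i v => M i (f v) with hA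
  set Ah : Matrix (Fin m₁) ↥s (ZMod p) := Matrix.of fun i v => Mhat i (f v) with hAh
  have hind : LinearIndependent (ZMod p) (fun v : s => Ahᵀ v) := by
    have heq : (fun v : s => Ahᵀ v) = fun v : s => (v : Fin m₁ → ZMod p) :=
      funext fun v => hf v
    rw [heq]
    exact hli
  have hliC : LinearIndependent ℂ (fun v : s => Aᵀ v) :=
    key_lemma hk γ hγ A Ah (fun i v => hM i (f v)) (fun i v => hMhat i (f v)) hind
  have hcols : ∀ v : ↥s, Aᵀ v ∈ LinearMap.range M.mulVecLin := by
    intro v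
    rw [Matrix.range_mulVecLin]
    exact Submodule.subset_span ⟨f v, rfl⟩
  set g : ↥s → LinearMap.range M.mulVecLin := fun v => ⟨Aᵀ v, hcols v⟩ with hg
  have hgind : LinearIndependent ℂ g := by
    apply LinearIndependent.of_comp (LinearMap.range M.mulVecLin).subtype
    exact hliC
  calc Mhat.rank = s.toFinset.card := hrank
    _ = Fintype.card ↥s := Set.toFinset_card s
    _ ≤ Module.finrank ℂ (LinearMap.range M.mulVecLin) := hgind.fintype_card_le_finrank
    _ = M.rank := rfl
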